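/- arXiv:1401.2761 — 2 statements merged into one kernel-verified Lean document; each statement's English description precedes it below -/
import Mathlib

section
/- Every Marot ring is a v-Marot ring; that is, if every regular ideal of a commutative ring R is generated as an R-module by its regular elements, then every regular divisorial ideal I of R satisfies I = (I^•)_v. -/
open scoped Pointwise

/-- For subsets `Z, X` of the total quotient ring `T`, the colon set
`(Z : X) = {a ∈ T | a X ⊆ Z}`. -/
def colonSet (T : Type*) [CommRing T] (Z X : Set T) : Set T :=
  {a : T | ∀ x ∈ X, a * x ∈ Z}

/-- The image of `R` inside its total quotient ring `T`. -/
def ringSet (R T : Type*) [CommRing R] [CommRing T] [Algebra R T] : Set T :=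
  Set.range (algebraMap R T)

/-- `X⁻¹ = (R : X)` for a subset `X ⊆ T`. -/
def invSet (R T : Type*) [CommRing R] [CommRing T] [Algebra R T] (X : Set T) : Set T :=
  colonSet T (ringSet R T) X

/-- The divisorial (v-) closure `X_v = (X⁻¹)⁻¹` of a subset `X ⊆ T`. -/
def vSet (R T : Type*) [CommRing R] [CommRing T] [Algebra R T] (X : Set T) : Set T :=
  invSet R T (invSet R T X)

/-- The set of regular elements (non-zero-divisors) of `T`. -/
def regSet (T : Type*) [CommRing T] : Set T :=
  {t : T | t ∈ nonZeroDivisors T}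

/-- The colon set computed inside `Q = T^• ` : `(Z :_Q X) = {a ∈ Q | a X ⊆ Z}`. -/
def colonQ (T : Type*) [CommRing T] (Z X : Set T) : Set T :=
  {a : T | a ∈ nonZeroDivisors T ∧ ∀ x ∈ X, a * x ∈ Z}

/-- The monoid `H = R^•` of regular elements of `R`, viewed inside `T`. -/
def HSet (R T : Type*) [CommRing R] [CommRing T] [Algebra R T] : Set T :=
  ringSet R T ∩ regSet T

/-- The v-closure of a subset of `Q = T^•` with respect to the monoid `H = R^•`. -/
def vMon (R T : Type*) [CommRing R] [CommRing T] [Algebra R T] (X : Set T) : Set T :=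
  colonQ T (HSet R T) (colonQ T (HSet R T) X)

/-- `X ⊆ T` is `R`-fractional: `cX ⊆ R` for some regular `c ∈ R^•`. -/
def isFrac (R T : Type*) [CommRing R] [CommRing T] [Algebra R T] (X : Set T) : Prop :=
  ∃ c : R, c ∈ nonZeroDivisors R ∧ ∀ x ∈ X, algebraMap R T c * x ∈ ringSet R T

/-- The complete integral closure `R̂` of `R` in `T`. -/
def hatSet (R T : Type*) [CommRing R] [CommRing T] [Algebra R T] : Set T :=
  {x : T | ∃ c : R, c ∈ nonZeroDivisors R ∧
    ∀ n : ℕ, 1 ≤ n → algebraMap R T c * x ^ n ∈ ringSet R T}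

/-- The complete integral closure `Ĥ` of the monoid `H = R^•` in `q(H) = T^•`. -/
def monHat (R T : Type*) [CommRing R] [CommRing T] [Algebra R T] : Set T :=
  {x : T | x ∈ nonZeroDivisors T ∧
    ∃ c ∈ HSet R T, ∀ n : ℕ, 1 ≤ n → c * x ^ n ∈ HSet R T}

/-- `R` is a v-Marot ring: every regular fractional divisorial ideal is
v-generated by its regular elements. -/
def isVMarot (R T : Type*) [CommRing R] [CommRing T] [Algebra R T] : Prop :=
  ∀ I : Set T, (I ∩ regSet T).Nonempty → isFrac R T I → vSet R T I = I →
    I = vSet R T (I ∩ regSet T)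


section Aux
variable (R T : Type*) [CommRing R] [CommRing T] [Algebra R T]

/-- `invSet` as a submodule of `T`. -/
def invSubmodule (X : Set T) : Submodule R T where
  carrier := invSet R T X
  add_mem' := by
    intro a b ha hb x hx
    obtain ⟨r, hr⟩ := ha x hx
    obtain ⟨s, hs⟩ := hb x hx
    exact ⟨r + s, by rw [map_add, hr, hs, add_mul]⟩
  zero_mem' := by
    intro x hx
    exact ⟨0, by rw [map_zero, zero_mul]⟩
  smul_mem' := by
    intro c a ha x hx
    obtain ⟨r, hr⟩ := ha x hx
    exact ⟨c * r, by rw [map_mul, hr, Algebra.smul_def, mul_assoc]⟩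

lemma invSet_anti {X Y : Set T} (h : X ⊆ Y) : invSet R T Y ⊆ invSet R T X :=
  fun a ha x hx => ha x (h hx)

lemma subset_vSet (X : Set T) : X ⊆ vSet R T X := by
  intro x hx a ha
  obtain ⟨r, hr⟩ := ha x hx
  exact ⟨r, by rw [hr, mul_comm]⟩

lemma vSet_mono {X Y : Set T} (h : X ⊆ Y) : vSet R T X ⊆ vSet R T Y :=
  invSet_anti R T (invSet_anti R T h)

lemma mem_invSubmodule (X : Set T) (a : T) :
    a ∈ invSubmodule R T X ↔ a ∈ invSet R T X := Iff.rfl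

lemma vSet_eq_invSubmodule (X : Set T) :
    vSet R T X = (invSubmodule R T (invSet R T X) : Set T) := rfl

end Aux

theorem stmt11 (R T : Type*) [CommRing R] [CommRing T] [Algebra R T] [IsFractionRing R T]
    (hMarot : ∀ I : Ideal R, ((I : Set R) ∩ {r : R | r ∈ nonZeroDivisors R}).Nonempty →
      I = Ideal.span ((I : Set R) ∩ {r : R | r ∈ nonZeroDivisors R})) :
    ∀ I : Set T, I ⊆ ringSet R T → (I ∩ regSet T).Nonempty → vSet R T I = I →
      I = vSet R T (I ∩ regSet T) := by
  intro I hIR hreg hv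
  -- the map of a regular element of R is regular in T
  have hregmap : ∀ s : R, s ∈ nonZeroDivisors R → algebraMap R T s ∈ nonZeroDivisors T := by
    intro s hs
    exact (IsLocalization.map_units T (⟨s, hs⟩ : nonZeroDivisors R)).mem_nonZeroDivisors
  -- I is (the carrier of) a submodule
  set M : Submodule R T := invSubmodule R T (invSet R T I) with hM
  have hMI : (M : Set T) = I := hv
  -- the ideal J = preimage of I
  set J : Ideal R := M.comap (Algebra.linearMap R T) with hJ
  have hJmem : ∀ r : R, r ∈ J ↔ algebraMap R T r ∈ I := by
    intro r
    rw [hJ, Submodule.mem_comap]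
    change algebraMap R T r ∈ (M : Set T) ↔ _
    rw [hMI]
  -- J is regular
  obtain ⟨u, huI, hureg⟩ := hreg
  obtain ⟨s, hsu⟩ := hIR huI
  have hsR : s ∈ nonZeroDivisors R := by
    rw [mem_nonZeroDivisors_iff_right]
    intro x hx
    have : algebraMap R T x * algebraMap R T s = 0 := by rw [← map_mul, hx, map_zero]
    rw [hsu] at this
    have := (mul_right_mem_nonZeroDivisors_eq_zero_iff hureg).mp this
    exact IsFractionRing.injective R T (by rw [this, map_zero])
  have hsJ : s ∈ J := (hJmem s).mpr (hsu ▸ huI)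
  have hJreg : ((J : Set R) ∩ {r : R | r ∈ nonZeroDivisors R}).Nonempty := ⟨s, hsJ, hsR⟩
  have hJspan := hMarot J hJreg
  -- the submodule N whose carrier is vSet (I ∩ regSet T)
  set N : Submodule R T := invSubmodule R T (invSet R T (I ∩ regSet T)) with hN
  have hNv : (N : Set T) = vSet R T (I ∩ regSet T) := rfl
  apply Set.Subset.antisymm
  · -- I ⊆ vSet (I ∩ regSet T)
    intro x hx
    obtain ⟨r, hrx⟩ := hIR hx
    have hrJ : r ∈ J := (hJmem r).mpr (hrx ▸ hx)
    rw [hJspan] at hrJ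
    have hgen : (J : Set R) ∩ {r : R | r ∈ nonZeroDivisors R} ⊆
        ↑(N.comap (Algebra.linearMap R T)) := by
      rintro t ⟨htJ, htreg⟩
      have h1 : algebraMap R T t ∈ I ∩ regSet T := ⟨(hJmem t).mp htJ, hregmap t htreg⟩
      have h2 : algebraMap R T t ∈ vSet R T (I ∩ regSet T) :=
        subset_vSet R T (I ∩ regSet T) h1
      exact h2
    have := Ideal.span_le.mpr hgen hrJ
    rw [Submodule.mem_comap] at this
    rw [← hrx]
    exact this
  · -- vSet (I ∩ regSet T) ⊆ I
    have h := vSet_mono R T (Set.inter_subset_left (s := I) (t := regSet T))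
    rw [hv] at h
    exact h
end

section
/- Let R be a v-Marot ring with total quotient ring T, H = R^•, Q = q(H). If I is a regular fractional divisorial ideal of R, then (R :_T I)^• = (H :_Q I^•), and for every nonempty H-fractional subset 𝔞 ⊆ Q one has (𝔞_{v_R})^• = 𝔞_{v_H}. -/
open scoped Pointwise

lemma ringSet_mul {R T : Type*} [CommRing R] [CommRing T] [Algebra R T] {a b : T}
    (ha : a ∈ ringSet R T) (hb : b ∈ ringSet R T) : a * b ∈ ringSet R T := by
  obtain ⟨r, rfl⟩ := ha; obtain ⟨s, rfl⟩ := hb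
  exact ⟨r * s, map_mul _ _ _⟩

lemma invSet_antitone {R T : Type*} [CommRing R] [CommRing T] [Algebra R T] {X Y : Set T}
    (h : X ⊆ Y) : invSet R T Y ⊆ invSet R T X :=
  fun _ ha x hx => ha x (h hx)

lemma subset_inv_inv {R T : Type*} [CommRing R] [CommRing T] [Algebra R T] (X : Set T) :
    X ⊆ invSet R T (invSet R T X) := by
  intro x hx b hb
  rw [mul_comm]
  exact hb x hx

lemma vSet_invSet {R T : Type*} [CommRing R] [CommRing T] [Algebra R T] (X : Set T) :
    vSet R T (invSet R T X) = invSet R T X := by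
  apply Set.Subset.antisymm
  · exact invSet_antitone (subset_inv_inv X)
  · exact subset_inv_inv (invSet R T X)

theorem stmt14 (R T : Type*) [CommRing R] [CommRing T] [Algebra R T] [IsFractionRing R T]
    (hM : isVMarot R T) :
    (∀ I : Set T, (I ∩ regSet T).Nonempty → isFrac R T I → vSet R T I = I →
        colonSet T (ringSet R T) I ∩ regSet T = colonQ T (HSet R T) (I ∩ regSet T)) ∧
      (∀ 𝔞 : Set T, 𝔞 ⊆ regSet T → 𝔞.Nonempty →
        (∃ c ∈ HSet R T, ∀ x ∈ 𝔞, c * x ∈ HSet R T) →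
        vSet R T 𝔞 ∩ regSet T = vMon R T 𝔞) := by
  constructor
  · -- Part 1
    intro I hreg hfrac hdiv
    have hI : I = vSet R T (I ∩ regSet T) := hM I hreg hfrac hdiv
    ext a
    constructor
    · rintro ⟨ha, hareg⟩
      refine ⟨hareg, fun x hx => ?_⟩
      exact ⟨ha x hx.1, (mul_mem hareg hx.2 : _ ∈ nonZeroDivisors T)⟩
    · rintro ⟨hareg, ha⟩
      refine ⟨fun x hxI => ?_, hareg⟩
      have haInv : a ∈ invSet R T (I ∩ regSet T) := fun y hy => (ha y hy).1
      have hx' : x ∈ vSet R T (I ∩ regSet T) := hI ▸ hxI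
      have := hx' a haInv
      rwa [mul_comm] at this
  · -- Part 2
    rintro 𝔞 hreg hne ⟨c, hcH, hc𝔞⟩
    set B : Set T := invSet R T 𝔞 with hBdef
    -- B contains the regular element c
    have hcB : c ∈ B := fun x hx => (hc𝔞 x hx).1
    have hBreg : (B ∩ regSet T).Nonempty := ⟨c, hcB, hcH.2⟩
    -- B is fractional
    have hBfrac : isFrac R T B := by
      obtain ⟨x₀, hx₀⟩ := hne
      obtain ⟨⟨d, hd⟩, hdreg⟩ := hc𝔞 x₀ hx₀
      refine ⟨d, ?_, fun b hb => ?_⟩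
      · rw [mem_nonZeroDivisors_iff_right]; intro r hr
        have : algebraMap R T r * algebraMap R T d = 0 := by
          rw [← map_mul, hr, map_zero]
        rw [hd] at this
        have h0 : algebraMap R T r = 0 := mem_nonZeroDivisors_iff_right.mp hdreg _ this
        exact IsFractionRing.injective R T (by rw [h0, map_zero])
      · have hb0 : b * x₀ ∈ ringSet R T := hb x₀ hx₀
        have : algebraMap R T d * b = c * (b * x₀) := by
          rw [hd]; ring
        rw [this]
        exact ringSet_mul hcH.1 hb0
    -- B is divisorial
    have hBdiv : vSet R T B = B := vSet_invSet 𝔞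
    have hMB : B = vSet R T (B ∩ regSet T) := hM B hBreg hBfrac hBdiv
    -- colonQ H 𝔞 = B ∩ regSet
    have hAbar : colonQ T (HSet R T) 𝔞 = B ∩ regSet T := by
      ext a
      constructor
      · rintro ⟨hareg, ha⟩
        exact ⟨fun x hx => (ha x hx).1, hareg⟩
      · rintro ⟨haB, hareg⟩
        exact ⟨hareg, fun x hx => ⟨haB x hx, (mul_mem hareg (hreg hx) : _ ∈ nonZeroDivisors T)⟩⟩
    ext a
    constructor
    · rintro ⟨haV, hareg⟩
      -- haV : a ∈ invSet (invSet 𝔞)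
      refine ⟨hareg, ?_⟩
      rw [hAbar]
      rintro b ⟨hbB, hbreg⟩
      exact ⟨haV b hbB, (mul_mem hareg hbreg : _ ∈ nonZeroDivisors T)⟩
    · rintro ⟨hareg, ha⟩
      rw [hAbar] at ha
      refine ⟨?_, hareg⟩
      -- goal: a ∈ invSet (invSet 𝔞) = invSet B
      intro x hxB
      have haInv : a ∈ invSet R T (B ∩ regSet T) := fun y hy => (ha y hy).1
      have hx' : x ∈ vSet R T (B ∩ regSet T) := hMB ▸ hxB
      have := hx' a haInv
      rwa [mul_comm] at this
end
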